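/- arXiv:2103.09279 — 3 statements merged into one kernel-verified Lean document; each statement's English description precedes it below -/
import Mathlib

section
/- Let Φ be an n×n complex Hermitian matrix and Ψ an n×n invertible skew-Hermitian matrix (Ψ* = −Ψ). For θ ∈ ℝ set c := cos(θΨ), s := sin(θΨ), D(θ) := c − Φ Ψ⁻¹ s and D'(θ) := −Ψ s − Φ c. Then D(θ) D'(θ)* = D'(θ) D(θ)*. Consequently, if D(θ) is invertible, then the matrix U(θ) := −D(θ)⁻¹ D'(θ) is Hermitian. -/
open Matrix

/-- The matrix cosine `cos M := (exp(iM) + exp(−iM))/2` of a complex square matrix. -/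
noncomputable def matCos {n : ℕ} (M : Matrix (Fin n) (Fin n) ℂ) : Matrix (Fin n) (Fin n) ℂ :=
  ((2:ℂ))⁻¹ • (NormedSpace.exp (Complex.I • M) + NormedSpace.exp (-(Complex.I • M)))

/-- The matrix sine `sin M := (exp(iM) − exp(−iM))/(2i)` of a complex square matrix. -/
noncomputable def matSin {n : ℕ} (M : Matrix (Fin n) (Fin n) ℂ) : Matrix (Fin n) (Fin n) ℂ :=
  (2 * Complex.I)⁻¹ • (NormedSpace.exp (Complex.I • M) - NormedSpace.exp (-(Complex.I • M)))

lemma aux_ring {R : Type*} [Ring R] (c s P A F : R)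
    (hcs : c * s = s * c) (hPc : P * c = c * P) (hPs : P * s = s * P)
    (hAs : A * s = s * A) (hAc : A * c = c * A)
    (hAP : A * P = 1) (hPA : P * A = 1)
    (hss : s * s = 1 - c * c) :
    (c - F * A * s) * (-(s * P) - c * F) = (-(P * s) - F * c) * (c - s * A * F) := by
  have k1 : A * s * s * P = 1 - c * c := by
    rw [hAs, mul_assoc s A s, hAs, ← mul_assoc, mul_assoc, hAP, mul_one, hss]
  have k2 : P * s * s * A = 1 - c * c := by
    rw [hPs, mul_assoc s P s, hPs, ← mul_assoc, mul_assoc, hPA, mul_one, hss]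
  have k3 : A * s * c = c * s * A := by
    rw [hAs, mul_assoc, hAc, ← mul_assoc, ← hcs]
  have k4 : P * s * c = c * s * P := by
    rw [hPs, mul_assoc, hPc, ← mul_assoc, ← hcs]
  calc (c - F * A * s) * (-(s * P) - c * F)
      = -(c*s*P) - c*c*F + F*(A*s*s*P) + F*(A*s*c)*F := by noncomm_ring
    _ = -(c*s*P) - c*c*F + F*(1 - c*c) + F*(c*s*A)*F := by rw [k1, k3]
    _ = -(c*s*P) - F*c*c + (1 - c*c)*F + F*(c*s*A)*F := by noncomm_ring
    _ = -(P*s*c) - F*c*c + (P*s*s*A)*F + F*(c*s*A)*F := by rw [k2, k4]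
    _ = (-(P * s) - F * c) * (c - s * A * F) := by noncomm_ring

/-- For `Φ` Hermitian and `Ψ` invertible skew-Hermitian, set
`c := cos(θΨ)`, `s := sin(θΨ)`, `D := c − Φ Ψ⁻¹ s`, `D' := −Ψ s − Φ c`. Then
`D D'* = D' D*`, and if `D` is invertible then `U := −D⁻¹ D'` is Hermitian. -/
theorem matD_symmetry_and_U_hermitian {n : ℕ} (Φ Ψ : Matrix (Fin n) (Fin n) ℂ)
    (hΦ : Φ.IsHermitian) (hΨskew : Ψᴴ = -Ψ) (hΨ : IsUnit Ψ) (θ : ℝ) :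
    (matCos (θ • Ψ) - Φ * Ψ⁻¹ * matSin (θ • Ψ))
        * (-(Ψ * matSin (θ • Ψ)) - Φ * matCos (θ • Ψ))ᴴ
      = (-(Ψ * matSin (θ • Ψ)) - Φ * matCos (θ • Ψ))
        * (matCos (θ • Ψ) - Φ * Ψ⁻¹ * matSin (θ • Ψ))ᴴ ∧
    (IsUnit (matCos (θ • Ψ) - Φ * Ψ⁻¹ * matSin (θ • Ψ)) →
      (-((matCos (θ • Ψ) - Φ * Ψ⁻¹ * matSin (θ • Ψ))⁻¹
          * (-(Ψ * matSin (θ • Ψ)) - Φ * matCos (θ • Ψ)))).IsHermitian) := by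
  set M : Matrix (Fin n) (Fin n) ℂ := θ • Ψ with hM
  have hMH : Mᴴ = -M := by rw [hM, conjTranspose_smul, hΨskew]; simp
  set E := NormedSpace.exp (Complex.I • M) with hE
  set F := NormedSpace.exp (-(Complex.I • M)) with hF
  have hIMH : (Complex.I • M)ᴴ = Complex.I • M := by
    rw [conjTranspose_smul, hMH]; simp
  have hEH : Eᴴ = E := by rw [hE, ← Matrix.exp_conjTranspose _, hIMH]
  have hFH : Fᴴ = F := by rw [hF, ← Matrix.exp_conjTranspose _, conjTranspose_neg, hIMH]
  have hEF : E * F = 1 := by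
    rw [hE, hF, ← Matrix.exp_add_of_commute _ _ ((Commute.refl (Complex.I • M)).neg_right)]
    simp [NormedSpace.exp_zero]
  have hFE : F * E = 1 := by
    rw [hE, hF, ← Matrix.exp_add_of_commute _ _ ((Commute.refl (Complex.I • M)).neg_left)]
    simp [NormedSpace.exp_zero]
  have hΨM : Commute Ψ (Complex.I • M) := (((Commute.refl Ψ).smul_right θ).smul_right _)
  have hΨE : Commute Ψ E := hΨM.exp_right
  have hΨF : Commute Ψ F := hΨM.neg_right.exp_right
  have hcEF : Commute E F := hEF.trans hFE.symm
  set c := matCos M with hc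
  set s := matSin M with hs
  have hcdef : c = ((2:ℂ))⁻¹ • (E + F) := rfl
  have hsdef : s = (2 * Complex.I)⁻¹ • (E - F) := rfl
  have hΨc : Commute Ψ c := by rw [hcdef]; exact (hΨE.add_right hΨF).smul_right _
  have hΨs : Commute Ψ s := by rw [hsdef]; exact (hΨE.sub_right hΨF).smul_right _
  have hEc : Commute E c := by rw [hcdef]; exact ((Commute.refl E).add_right hcEF).smul_right _
  have hFc : Commute F c := by rw [hcdef]; exact (hcEF.symm.add_right (Commute.refl F)).smul_right _
  have hsc : Commute s c := by rw [hsdef]; exact (hEc.sub_left hFc).smul_left _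
  -- Pythagoras
  have h2I : ((2 * Complex.I)⁻¹ * (2 * Complex.I)⁻¹ : ℂ) = -((2:ℂ)⁻¹ * (2:ℂ)⁻¹) := by
    rw [← mul_inv, mul_mul_mul_comm, Complex.I_mul_I]
    norm_num
  have hpyth : c * c + s * s = 1 := by
    rw [hcdef, hsdef, smul_mul_smul_comm, smul_mul_smul_comm, h2I,
      add_mul, mul_add, mul_add, sub_mul, mul_sub, mul_sub, hEF, hFE]
    module
  have hss : s * s = 1 - c * c := eq_sub_of_add_eq' hpyth
  -- inverse facts
  have hdet : IsUnit Ψ.det := (Matrix.isUnit_iff_isUnit_det Ψ).mp hΨ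
  have hAP : Ψ⁻¹ * Ψ = 1 := Matrix.nonsing_inv_mul Ψ hdet
  have hPA : Ψ * Ψ⁻¹ = 1 := Matrix.mul_nonsing_inv Ψ hdet
  have hinvcomm : ∀ X : Matrix (Fin n) (Fin n) ℂ, Ψ * X = X * Ψ → Ψ⁻¹ * X = X * Ψ⁻¹ := by
    intro X h
    calc Ψ⁻¹ * X = Ψ⁻¹ * X * (Ψ * Ψ⁻¹) := by rw [hPA, mul_one]
      _ = Ψ⁻¹ * (X * Ψ) * Ψ⁻¹ := by rw [← mul_assoc, mul_assoc Ψ⁻¹ X Ψ]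
      _ = Ψ⁻¹ * (Ψ * X) * Ψ⁻¹ := by rw [← h]
      _ = X * Ψ⁻¹ := by rw [← mul_assoc Ψ⁻¹ Ψ X, hAP, one_mul]
  have hAc : Ψ⁻¹ * c = c * Ψ⁻¹ := hinvcomm c hΨc.eq
  have hAs : Ψ⁻¹ * s = s * Ψ⁻¹ := hinvcomm s hΨs.eq
  -- conjTranspose facts
  have hcH : cᴴ = c := by
    rw [hcdef, conjTranspose_smul, conjTranspose_add, hEH, hFH]
    norm_num
  have hsH : sᴴ = -s := by
    rw [hsdef, conjTranspose_smul, conjTranspose_sub, hEH, hFH]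
    have hstar : (star ((2 * Complex.I)⁻¹) : ℂ) = -(2 * Complex.I)⁻¹ := by
      simp [Complex.ext_iff]
    rw [hstar, neg_smul]
  have hAH : (Ψ⁻¹)ᴴ = -Ψ⁻¹ := by
    rw [Matrix.conjTranspose_nonsing_inv, hΨskew]
    exact Matrix.inv_eq_right_inv (by rw [neg_mul_neg, hPA])
  -- conjTranspose of D and D'
  have hD'H : (-(Ψ * s) - Φ * c)ᴴ = -(s * Ψ) - c * Φ := by
    rw [conjTranspose_sub, conjTranspose_neg, conjTranspose_mul, conjTranspose_mul,
      hsH, hcH, hΨskew, hΦ.eq]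
    noncomm_ring
  have hDH : (c - Φ * Ψ⁻¹ * s)ᴴ = c - s * Ψ⁻¹ * Φ := by
    rw [conjTranspose_sub, conjTranspose_mul, conjTranspose_mul,
      hsH, hcH, hAH, hΦ.eq]
    noncomm_ring
  have key : (c - Φ * Ψ⁻¹ * s) * (-(Ψ * s) - Φ * c)ᴴ
      = (-(Ψ * s) - Φ * c) * (c - Φ * Ψ⁻¹ * s)ᴴ := by
    rw [hD'H, hDH]
    exact aux_ring c s Ψ (Ψ⁻¹) Φ hsc.symm.eq hΨc.eq hΨs.eq hAs hAc hAP hPA hss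
  refine ⟨key, ?_⟩
  intro hD
  have hDdet : IsUnit (c - Φ * Ψ⁻¹ * s).det := (Matrix.isUnit_iff_isUnit_det _).mp hD
  have hDHdet : IsUnit ((c - Φ * Ψ⁻¹ * s)ᴴ).det := by
    rw [Matrix.det_conjTranspose]
    exact hDdet.star
  rw [Matrix.IsHermitian]
  rw [conjTranspose_neg, conjTranspose_mul, Matrix.conjTranspose_nonsing_inv]
  congr 1
  calc (-(Ψ*s) - Φ*c)ᴴ * ((c - Φ*Ψ⁻¹*s)ᴴ)⁻¹
      = (c - Φ*Ψ⁻¹*s)⁻¹ * ((c - Φ*Ψ⁻¹*s) * (-(Ψ*s) - Φ*c)ᴴ) * ((c - Φ*Ψ⁻¹*s)ᴴ)⁻¹ := by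
        rw [← mul_assoc, Matrix.nonsing_inv_mul _ hDdet, one_mul]
    _ = (c - Φ*Ψ⁻¹*s)⁻¹ * ((-(Ψ*s) - Φ*c) * (c - Φ*Ψ⁻¹*s)ᴴ) * ((c - Φ*Ψ⁻¹*s)ᴴ)⁻¹ := by
        rw [key]
    _ = (c - Φ*Ψ⁻¹*s)⁻¹ * (-(Ψ*s) - Φ*c) := by
        rw [mul_assoc ((c - Φ*Ψ⁻¹*s)⁻¹), mul_assoc (-(Ψ*s) - Φ*c),
          Matrix.mul_nonsing_inv _ hDHdet, mul_one]
end

section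
/- Let T > 0, let A ∈ ℝ^{ν×ν}, Θ ∈ ℝ^{ν×ν} with Θᵀ = −Θ, and S ∈ ℝ^{n×ν}. Define the kernel Λ : ℝ → ℝ^{n×n} by Λ(τ) = S exp(τA) Θ Sᵀ for τ ≥ 0 and Λ(τ) = S Θ exp(−τAᵀ) Sᵀ for τ < 0. For a continuous function f : [0,T] → ℂⁿ, define h₊(t) := ∫₀ᵗ exp((t−τ)A) Θ Sᵀ f(τ) dτ and h₋(t) := ∫ₜᵀ exp((τ−t)Aᵀ) Sᵀ f(τ) dτ. Then (i) ∫₀ᵀ Λ(s−t) f(t) dt = S (h₊(s) + Θ h₋(s)) for all s ∈ [0,T]; (ii) h₊ and h₋ are differentiable on [0,T] with ḣ₊(t) = A h₊(t) + Θ Sᵀ f(t) and ḣ₋(t) = −Aᵀ h₋(t) − Sᵀ f(t); and (iii) h₊(0) = 0 and h₋(T) = 0. -/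
open MeasureTheory Matrix

attribute [local instance] Matrix.linftyOpSemiNormedRing Matrix.linftyOpNormedRing
  Matrix.linftyOpNormedAlgebra Matrix.linftyOpNormedAddCommGroup Matrix.linftyOpNormedSpace

namespace OqhoAux

noncomputable def mapCLM (p q : ℕ) :
    Matrix (Fin p) (Fin q) ℝ →L[ℝ] Matrix (Fin p) (Fin q) ℂ :=
  LinearMap.toContinuousLinearMap
  { toFun := fun M => M.map ((↑) : ℝ → ℂ)
    map_add' := fun M N => by ext i j; simp [Matrix.map_apply]
    map_smul' := fun r M => by ext i j; simp [Matrix.map_apply, Complex.real_smul] }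

@[simp] theorem mapCLM_apply {p q : ℕ} (M : Matrix (Fin p) (Fin q) ℝ) :
    mapCLM p q M = M.map ((↑) : ℝ → ℂ) := rfl

noncomputable def mulVecB (p q : ℕ) :
    Matrix (Fin p) (Fin q) ℂ →L[ℝ] (Fin q → ℂ) →L[ℝ] (Fin p → ℂ) :=
  LinearMap.toContinuousLinearMap
  { toFun := fun M => (M.mulVecLin.restrictScalars ℝ).toContinuousLinearMap
    map_add' := fun M N => by ext v i; simp [Matrix.add_mulVec]
    map_smul' := fun r M => by
      ext v i
      simp [Matrix.mulVec, dotProduct, Finset.smul_sum, Complex.real_smul,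
        Matrix.smul_apply, mul_assoc, Finset.mul_sum] }

@[simp] theorem mulVecB_apply {p q : ℕ} (M : Matrix (Fin p) (Fin q) ℂ) (v : Fin q → ℂ) :
    mulVecB p q M v = M *ᵥ v := rfl

theorem map_mul_c {p q r : ℕ} (M : Matrix (Fin p) (Fin q) ℝ) (N : Matrix (Fin q) (Fin r) ℝ) :
    ((M * N).map ((↑) : ℝ → ℂ)) = M.map ((↑) : ℝ → ℂ) * N.map ((↑) : ℝ → ℂ) :=
  Matrix.map_mul (f := Complex.ofRealHom)

theorem map_one_c {p : ℕ} : ((1 : Matrix (Fin p) (Fin p) ℝ).map ((↑) : ℝ → ℂ)) = 1 := by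
  simp

/-- product rule for `t ↦ M t *ᵥ v t`. -/
theorem hasDerivAt_mulVec {p q : ℕ} {M : ℝ → Matrix (Fin p) (Fin q) ℂ}
    {v : ℝ → Fin q → ℂ} {M' : Matrix (Fin p) (Fin q) ℂ} {v' : Fin q → ℂ} {x : ℝ}
    (hM : HasDerivAt M M' x) (hv : HasDerivAt v v' x) :
    HasDerivAt (fun t => M t *ᵥ v t) (M' *ᵥ v x + M x *ᵥ v') x := by
  have h1 : HasDerivAt (fun t => mulVecB p q (M t)) (mulVecB p q M') x :=
    (mulVecB p q).hasFDerivAt.comp_hasDerivAt x hM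
  simpa only [mulVecB_apply] using h1.clm_apply hv

theorem integral_mulVec {p q : ℕ} (M : Matrix (Fin p) (Fin q) ℂ) {v : ℝ → Fin q → ℂ} {a b : ℝ}
    (hv : IntervalIntegrable v volume a b) :
    (∫ t in a..b, M *ᵥ v t) = M *ᵥ ∫ t in a..b, v t := by
  simpa only [mulVecB_apply] using ((mulVecB p q M).intervalIntegral_comp_comm hv)

theorem hasDerivAt_expc {p : ℕ} (A : Matrix (Fin p) (Fin p) ℝ) (t : ℝ) :
    HasDerivAt (fun u : ℝ => (NormedSpace.exp (u • A)).map ((↑) : ℝ → ℂ))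
      ((A.map ((↑) : ℝ → ℂ)) * (NormedSpace.exp (t • A)).map ((↑) : ℝ → ℂ)) t := by
  have h := (mapCLM p p).hasFDerivAt.comp_hasDerivAt t (hasDerivAt_exp_smul_const' A t)
  exact h.congr_deriv (map_mul_c _ _)

theorem expc_add {p : ℕ} (A : Matrix (Fin p) (Fin p) ℝ) (s t : ℝ) :
    ((NormedSpace.exp ((s + t) • A)).map ((↑) : ℝ → ℂ))
      = (NormedSpace.exp (s • A)).map ((↑) : ℝ → ℂ)
        * (NormedSpace.exp (t • A)).map ((↑) : ℝ → ℂ) := by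
  rw [add_smul, ← map_mul_c]
  congr 1
  exact NormedSpace.exp_add_of_commute (((Commute.refl A).smul_left s).smul_right t)

theorem expc_zero {p : ℕ} (A : Matrix (Fin p) (Fin p) ℝ) :
    ((NormedSpace.exp ((0 : ℝ) • A)).map ((↑) : ℝ → ℂ)) = 1 := by
  rw [zero_smul, NormedSpace.exp_zero, map_one_c]

theorem expc_mul_expc_neg {p : ℕ} (A : Matrix (Fin p) (Fin p) ℝ) (t : ℝ) :
    ((NormedSpace.exp (t • A)).map ((↑) : ℝ → ℂ))
      * (NormedSpace.exp ((-t) • A)).map ((↑) : ℝ → ℂ) = 1 := by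
  rw [← expc_add, add_neg_cancel, expc_zero]

theorem expc_neg_mul_expc {p : ℕ} (A : Matrix (Fin p) (Fin p) ℝ) (t : ℝ) :
    ((NormedSpace.exp ((-t) • A)).map ((↑) : ℝ → ℂ))
      * (NormedSpace.exp (t • A)).map ((↑) : ℝ → ℂ) = 1 := by
  have h := expc_mul_expc_neg A (-t)
  rwa [neg_neg] at h

theorem hasDerivAt_expc_neg {p : ℕ} (B : Matrix (Fin p) (Fin p) ℝ) (t : ℝ) :
    HasDerivAt (fun x : ℝ => (NormedSpace.exp ((-x) • B)).map ((↑) : ℝ → ℂ))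
      (-((B.map ((↑) : ℝ → ℂ)) * (NormedSpace.exp ((-t) • B)).map ((↑) : ℝ → ℂ))) t := by
  have h1 := hasDerivAt_expc (-B) t
  have hfun : (fun x : ℝ => (NormedSpace.exp (x • (-B))).map ((↑) : ℝ → ℂ))
      = fun x : ℝ => (NormedSpace.exp ((-x) • B)).map ((↑) : ℝ → ℂ) := by
    funext x; rw [smul_neg, ← neg_smul]
  have hval : (((-B).map ((↑) : ℝ → ℂ)) * (NormedSpace.exp (t • (-B))).map ((↑) : ℝ → ℂ))
      = -((B.map ((↑) : ℝ → ℂ)) * (NormedSpace.exp ((-t) • B)).map ((↑) : ℝ → ℂ)) := by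
    rw [smul_neg, ← neg_smul,
      show ((-B).map ((↑) : ℝ → ℂ)) = -(B.map ((↑) : ℝ → ℂ)) from by ext i j; simp, neg_mul]
  rw [hfun, hval] at h1
  exact h1

theorem continuous_expc {p : ℕ} (A : Matrix (Fin p) (Fin p) ℝ) :
    Continuous (fun u : ℝ => (NormedSpace.exp (u • A)).map ((↑) : ℝ → ℂ)) :=
  continuous_iff_continuousAt.2 fun t => (hasDerivAt_expc A t).continuousAt

theorem intervalIntegrable_of_eqOn {X : Type*} [NormedAddCommGroup X] {f g : ℝ → X} {a b : ℝ}
    (h : Set.EqOn f g (Set.uIcc a b)) (hg : IntervalIntegrable g volume a b) :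
    IntervalIntegrable f volume a b := by
  rw [intervalIntegrable_iff] at hg ⊢
  exact hg.congr_fun (fun x hx => (h (Set.Ioc_subset_Icc_self hx)).symm) measurableSet_uIoc

section

variable {ν n : ℕ}

theorem cont_fwd (A : Matrix (Fin ν) (Fin ν) ℝ) (W : Matrix (Fin ν) (Fin n) ℂ)
    {F : ℝ → Fin n → ℂ} (hFc : Continuous F) :
    Continuous fun τ : ℝ =>
      ((NormedSpace.exp ((-τ) • A)).map ((↑) : ℝ → ℂ)) *ᵥ (W *ᵥ F τ) := by
  have h1 : Continuous fun τ : ℝ =>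
      mulVecB ν ν ((NormedSpace.exp ((-τ) • A)).map ((↑) : ℝ → ℂ)) :=
    (mulVecB ν ν).continuous.comp ((continuous_expc A).comp continuous_neg)
  have h2 : Continuous fun τ : ℝ => W *ᵥ F τ := by
    simpa only [mulVecB_apply, Function.comp_def] using (mulVecB ν n W).continuous.comp hFc
  simpa only [mulVecB_apply] using h1.clm_apply h2

theorem cont_bwd (B : Matrix (Fin ν) (Fin ν) ℝ) (U : Matrix (Fin ν) (Fin n) ℂ)
    {F : ℝ → Fin n → ℂ} (hFc : Continuous F) :
    Continuous fun τ : ℝ =>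
      ((NormedSpace.exp (τ • B)).map ((↑) : ℝ → ℂ)) *ᵥ (U *ᵥ F τ) := by
  have h1 : Continuous fun τ : ℝ =>
      mulVecB ν ν ((NormedSpace.exp (τ • B)).map ((↑) : ℝ → ℂ)) :=
    (mulVecB ν ν).continuous.comp (continuous_expc B)
  have h2 : Continuous fun τ : ℝ => U *ᵥ F τ := by
    simpa only [mulVecB_apply, Function.comp_def] using (mulVecB ν n U).continuous.comp hFc
  simpa only [mulVecB_apply] using h1.clm_apply h2

theorem deriv_fwd (A : Matrix (Fin ν) (Fin ν) ℝ) (W : Matrix (Fin ν) (Fin n) ℂ)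
    {F : ℝ → Fin n → ℂ} (hFc : Continuous F) (t : ℝ) :
    HasDerivAt (fun x : ℝ => ((NormedSpace.exp (x • A)).map ((↑) : ℝ → ℂ)) *ᵥ
        ∫ τ in (0:ℝ)..x, ((NormedSpace.exp ((-τ) • A)).map ((↑) : ℝ → ℂ)) *ᵥ (W *ᵥ F τ))
      ((A.map ((↑) : ℝ → ℂ)) *ᵥ (((NormedSpace.exp (t • A)).map ((↑) : ℝ → ℂ)) *ᵥ
        ∫ τ in (0:ℝ)..t, ((NormedSpace.exp ((-τ) • A)).map ((↑) : ℝ → ℂ)) *ᵥ (W *ᵥ F τ))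
        + W *ᵥ F t) t := by
  have hφc := cont_fwd A W hFc
  have hg : HasDerivAt (fun x : ℝ =>
      ∫ τ in (0:ℝ)..x, ((NormedSpace.exp ((-τ) • A)).map ((↑) : ℝ → ℂ)) *ᵥ (W *ᵥ F τ))
      (((NormedSpace.exp ((-t) • A)).map ((↑) : ℝ → ℂ)) *ᵥ (W *ᵥ F t)) t :=
    (hφc.integral_hasStrictDerivAt 0 t).hasDerivAt
  have h := hasDerivAt_mulVec (hasDerivAt_expc A t) hg
  have h2 : ((A.map ((↑) : ℝ → ℂ)) * (NormedSpace.exp (t • A)).map ((↑) : ℝ → ℂ)) *ᵥ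
        (∫ τ in (0:ℝ)..t, ((NormedSpace.exp ((-τ) • A)).map ((↑) : ℝ → ℂ)) *ᵥ (W *ᵥ F τ))
        + ((NormedSpace.exp (t • A)).map ((↑) : ℝ → ℂ)) *ᵥ
          (((NormedSpace.exp ((-t) • A)).map ((↑) : ℝ → ℂ)) *ᵥ (W *ᵥ F t))
      = (A.map ((↑) : ℝ → ℂ)) *ᵥ (((NormedSpace.exp (t • A)).map ((↑) : ℝ → ℂ)) *ᵥ
        ∫ τ in (0:ℝ)..t, ((NormedSpace.exp ((-τ) • A)).map ((↑) : ℝ → ℂ)) *ᵥ (W *ᵥ F τ))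
        + W *ᵥ F t := by
    congr 1
    · exact (Matrix.mulVec_mulVec _ _ _).symm
    · rw [Matrix.mulVec_mulVec, Matrix.mulVec_mulVec, expc_mul_expc_neg A t, Matrix.one_mul]
  exact h2 ▸ h

theorem deriv_bwd (B : Matrix (Fin ν) (Fin ν) ℝ) (U : Matrix (Fin ν) (Fin n) ℂ)
    {F : ℝ → Fin n → ℂ} (hFc : Continuous F) (T t : ℝ) :
    HasDerivAt (fun x : ℝ => ((NormedSpace.exp ((-x) • B)).map ((↑) : ℝ → ℂ)) *ᵥ
        ∫ τ in x..T, ((NormedSpace.exp (τ • B)).map ((↑) : ℝ → ℂ)) *ᵥ (U *ᵥ F τ))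
      (-((B.map ((↑) : ℝ → ℂ)) *ᵥ (((NormedSpace.exp ((-t) • B)).map ((↑) : ℝ → ℂ)) *ᵥ
        ∫ τ in t..T, ((NormedSpace.exp (τ • B)).map ((↑) : ℝ → ℂ)) *ᵥ (U *ᵥ F τ)))
        - U *ᵥ F t) t := by
  have hψc := cont_bwd B U hFc
  have hk : HasDerivAt (fun x : ℝ =>
      ∫ τ in x..T, ((NormedSpace.exp (τ • B)).map ((↑) : ℝ → ℂ)) *ᵥ (U *ᵥ F τ))
      (-(((NormedSpace.exp (t • B)).map ((↑) : ℝ → ℂ)) *ᵥ (U *ᵥ F t))) t := by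
    have hfun : (fun x : ℝ =>
        ∫ τ in x..T, ((NormedSpace.exp (τ • B)).map ((↑) : ℝ → ℂ)) *ᵥ (U *ᵥ F τ))
        = fun x : ℝ =>
          -∫ τ in T..x, ((NormedSpace.exp (τ • B)).map ((↑) : ℝ → ℂ)) *ᵥ (U *ᵥ F τ) :=
      funext fun u => intervalIntegral.integral_symm T u
    rw [hfun]
    exact ((hψc.integral_hasStrictDerivAt T t).hasDerivAt).neg
  have hGm : HasDerivAt (fun x : ℝ => (NormedSpace.exp ((-x) • B)).map ((↑) : ℝ → ℂ))
      (-((B.map ((↑) : ℝ → ℂ)) * (NormedSpace.exp ((-t) • B)).map ((↑) : ℝ → ℂ))) t :=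
    hasDerivAt_expc_neg B t
  have h := hasDerivAt_mulVec hGm hk
  have h2 : (-((B.map ((↑) : ℝ → ℂ)) * (NormedSpace.exp ((-t) • B)).map ((↑) : ℝ → ℂ))) *ᵥ
        (∫ τ in t..T, ((NormedSpace.exp (τ • B)).map ((↑) : ℝ → ℂ)) *ᵥ (U *ᵥ F τ))
        + ((NormedSpace.exp ((-t) • B)).map ((↑) : ℝ → ℂ)) *ᵥ
          (-(((NormedSpace.exp (t • B)).map ((↑) : ℝ → ℂ)) *ᵥ (U *ᵥ F t)))
      = -((B.map ((↑) : ℝ → ℂ)) *ᵥ (((NormedSpace.exp ((-t) • B)).map ((↑) : ℝ → ℂ)) *ᵥ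
        ∫ τ in t..T, ((NormedSpace.exp (τ • B)).map ((↑) : ℝ → ℂ)) *ᵥ (U *ᵥ F τ)))
        - U *ᵥ F t := by
    rw [Matrix.neg_mulVec, Matrix.mulVec_neg, sub_eq_add_neg]
    congr 1
    · rw [Matrix.mulVec_mulVec]
    · rw [Matrix.mulVec_mulVec, Matrix.mulVec_mulVec, expc_neg_mul_expc B t, Matrix.one_mul]
  exact h2 ▸ h

theorem key_fwd (A Θ : Matrix (Fin ν) (Fin ν) ℝ) (S : Matrix (Fin n) (Fin ν) ℝ)
    (v : Fin n → ℂ) (t τ : ℝ) :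
    ((NormedSpace.exp ((t - τ) • A) * Θ * Sᵀ).map ((↑) : ℝ → ℂ)) *ᵥ v
      = ((NormedSpace.exp (t • A)).map ((↑) : ℝ → ℂ)) *ᵥ
        (((NormedSpace.exp ((-τ) • A)).map ((↑) : ℝ → ℂ)) *ᵥ
          (((Θ * Sᵀ).map ((↑) : ℝ → ℂ)) *ᵥ v)) := by
  rw [show t - τ = t + -τ from by ring, Matrix.mul_assoc, map_mul_c, expc_add]
  simp only [Matrix.mulVec_mulVec]
  rw [Matrix.mul_assoc]

theorem key_bwd (B : Matrix (Fin ν) (Fin ν) ℝ) (S : Matrix (Fin n) (Fin ν) ℝ)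
    (v : Fin n → ℂ) (t τ : ℝ) :
    ((NormedSpace.exp ((τ - t) • B) * Sᵀ).map ((↑) : ℝ → ℂ)) *ᵥ v
      = ((NormedSpace.exp ((-t) • B)).map ((↑) : ℝ → ℂ)) *ᵥ
        (((NormedSpace.exp (τ • B)).map ((↑) : ℝ → ℂ)) *ᵥ
          ((Sᵀ.map ((↑) : ℝ → ℂ)) *ᵥ v)) := by
  rw [show τ - t = -t + τ from by ring, map_mul_c, expc_add]
  simp only [Matrix.mulVec_mulVec]
  rw [Matrix.mul_assoc]

end

end OqhoAux
open OqhoAux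

/-- For the commutator kernel `Λ` of an open quantum harmonic oscillator
(with antisymmetric CCR matrix `Θ`, dynamics matrix `A` and weighting matrix `S`) and a
continuous `f : [0,T] → ℂⁿ`, the functions
`h₊(t) = ∫₀ᵗ exp((t−τ)A) Θ Sᵀ f(τ) dτ` and `h₋(t) = ∫ₜᵀ exp((τ−t)Aᵀ) Sᵀ f(τ) dτ`
satisfy: (i) `∫₀ᵀ Λ(s−t) f(t) dt = S (h₊(s) + Θ h₋(s))` on `[0,T]`;
(ii) `ḣ₊ = A h₊ + Θ Sᵀ f` and `ḣ₋ = −Aᵀ h₋ − Sᵀ f` on `[0,T]`;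
(iii) `h₊(0) = 0` and `h₋(T) = 0`. -/
theorem oqho_kernel_boundary_value_problem {ν n : ℕ} (T : ℝ) (hT : 0 < T)
    (A Θ : Matrix (Fin ν) (Fin ν) ℝ) (hΘ : Θᵀ = -Θ)
    (S : Matrix (Fin n) (Fin ν) ℝ)
    (f : ℝ → Fin n → ℂ) (hf : ContinuousOn f (Set.Icc 0 T))
    (Λ : ℝ → Matrix (Fin n) (Fin n) ℝ)
    (hΛ : ∀ τ : ℝ, Λ τ =
      if 0 ≤ τ then S * NormedSpace.exp (τ • A) * Θ * Sᵀ
      else S * Θ * NormedSpace.exp ((-τ) • Aᵀ) * Sᵀ)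
    (hplus hminus : ℝ → Fin ν → ℂ)
    (hp : ∀ t : ℝ, hplus t =
      ∫ τ in (0:ℝ)..t, ((NormedSpace.exp ((t - τ) • A) * Θ * Sᵀ).map ((↑) : ℝ → ℂ)) *ᵥ f τ)
    (hm : ∀ t : ℝ, hminus t =
      ∫ τ in t..T, ((NormedSpace.exp ((τ - t) • Aᵀ) * Sᵀ).map ((↑) : ℝ → ℂ)) *ᵥ f τ) :
    (∀ s ∈ Set.Icc (0:ℝ) T,
      (∫ t in (0:ℝ)..T, ((Λ (s - t)).map ((↑) : ℝ → ℂ)) *ᵥ f t)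
        = (S.map ((↑) : ℝ → ℂ)) *ᵥ (hplus s + (Θ.map ((↑) : ℝ → ℂ)) *ᵥ hminus s)) ∧
    (∀ t ∈ Set.Icc (0:ℝ) T,
      HasDerivWithinAt hplus
        ((A.map ((↑) : ℝ → ℂ)) *ᵥ hplus t + ((Θ * Sᵀ).map ((↑) : ℝ → ℂ)) *ᵥ f t)
        (Set.Icc 0 T) t ∧
      HasDerivWithinAt hminus
        (-((Aᵀ.map ((↑) : ℝ → ℂ)) *ᵥ hminus t) - (Sᵀ.map ((↑) : ℝ → ℂ)) *ᵥ f t)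
        (Set.Icc 0 T) t) ∧
    hplus 0 = 0 ∧ hminus T = 0 := by
  -- continuous extension of `f` to all of `ℝ`
  set F : ℝ → Fin n → ℂ := fun x => f (min T (max 0 x)) with hFdef
  have hFc : Continuous F := by
    apply hf.comp_continuous (continuous_const.min (continuous_const.max continuous_id))
    intro x
    exact ⟨le_min hT.le (le_max_left 0 x), min_le_left _ _⟩
  have hFeq : ∀ x ∈ Set.Icc (0:ℝ) T, F x = f x := by
    intro x hx
    simp only [hFdef]
    rw [max_eq_right hx.1, min_eq_right hx.2]
  -- canonical representations of hplus and hminus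
  have hrepP : ∀ t ∈ Set.Icc (0:ℝ) T,
      hplus t = ((NormedSpace.exp (t • A)).map ((↑) : ℝ → ℂ)) *ᵥ
        ∫ τ in (0:ℝ)..t, ((NormedSpace.exp ((-τ) • A)).map ((↑) : ℝ → ℂ)) *ᵥ
          (((Θ * Sᵀ).map ((↑) : ℝ → ℂ)) *ᵥ F τ) := by
    intro t ht
    rw [hp t]
    have hsub : Set.uIcc (0:ℝ) t ⊆ Set.Icc 0 T := by
      rw [Set.uIcc_of_le ht.1]; exact Set.Icc_subset_Icc_right ht.2
    have hEq : Set.EqOn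
        (fun τ => ((NormedSpace.exp ((t - τ) • A) * Θ * Sᵀ).map ((↑) : ℝ → ℂ)) *ᵥ f τ)
        (fun τ => ((NormedSpace.exp (t • A)).map ((↑) : ℝ → ℂ)) *ᵥ
          (((NormedSpace.exp ((-τ) • A)).map ((↑) : ℝ → ℂ)) *ᵥ
            (((Θ * Sᵀ).map ((↑) : ℝ → ℂ)) *ᵥ F τ))) (Set.uIcc 0 t) := by
      intro τ hτ
      show ((NormedSpace.exp ((t - τ) • A) * Θ * Sᵀ).map ((↑) : ℝ → ℂ)) *ᵥ f τ = _
      rw [← hFeq τ (hsub hτ), key_fwd]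
    rw [intervalIntegral.integral_congr hEq,
      integral_mulVec _ ((cont_fwd A ((Θ * Sᵀ).map ((↑) : ℝ → ℂ)) hFc).intervalIntegrable 0 t)]
  have hrepM : ∀ t ∈ Set.Icc (0:ℝ) T,
      hminus t = ((NormedSpace.exp ((-t) • Aᵀ)).map ((↑) : ℝ → ℂ)) *ᵥ
        ∫ τ in t..T, ((NormedSpace.exp (τ • Aᵀ)).map ((↑) : ℝ → ℂ)) *ᵥ
          ((Sᵀ.map ((↑) : ℝ → ℂ)) *ᵥ F τ) := by
    intro t ht
    rw [hm t]
    have hsub : Set.uIcc t T ⊆ Set.Icc 0 T := by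
      rw [Set.uIcc_of_le ht.2]; exact Set.Icc_subset_Icc_left ht.1
    have hEq : Set.EqOn
        (fun τ => ((NormedSpace.exp ((τ - t) • Aᵀ) * Sᵀ).map ((↑) : ℝ → ℂ)) *ᵥ f τ)
        (fun τ => ((NormedSpace.exp ((-t) • Aᵀ)).map ((↑) : ℝ → ℂ)) *ᵥ
          (((NormedSpace.exp (τ • Aᵀ)).map ((↑) : ℝ → ℂ)) *ᵥ
            ((Sᵀ.map ((↑) : ℝ → ℂ)) *ᵥ F τ))) (Set.uIcc t T) := by
      intro τ hτ
      show ((NormedSpace.exp ((τ - t) • Aᵀ) * Sᵀ).map ((↑) : ℝ → ℂ)) *ᵥ f τ = _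
      rw [← hFeq τ (hsub hτ), key_bwd]
    rw [intervalIntegral.integral_congr hEq,
      integral_mulVec _ ((cont_bwd Aᵀ (Sᵀ.map ((↑) : ℝ → ℂ)) hFc).intervalIntegrable t T)]
  refine ⟨?_, ?_, ?_, ?_⟩
  · -- part (i)
    intro s hs
    have h0s : Set.uIcc (0:ℝ) s = Set.Icc 0 s := Set.uIcc_of_le hs.1
    have hsT : Set.uIcc s T = Set.Icc s T := Set.uIcc_of_le hs.2
    have hEq1 : Set.EqOn (fun t => ((Λ (s - t)).map ((↑) : ℝ → ℂ)) *ᵥ f t)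
        (fun t => ((S.map ((↑) : ℝ → ℂ)) * (NormedSpace.exp (s • A)).map ((↑) : ℝ → ℂ)) *ᵥ
          (((NormedSpace.exp ((-t) • A)).map ((↑) : ℝ → ℂ)) *ᵥ
            (((Θ * Sᵀ).map ((↑) : ℝ → ℂ)) *ᵥ F t))) (Set.uIcc 0 s) := by
      intro t ht'
      rw [h0s] at ht'
      have htT : t ∈ Set.Icc (0:ℝ) T := ⟨ht'.1, ht'.2.trans hs.2⟩
      show ((Λ (s - t)).map ((↑) : ℝ → ℂ)) *ᵥ f t = _
      rw [hΛ (s - t), if_pos (by linarith [ht'.2] : (0:ℝ) ≤ s - t), ← hFeq t htT]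
      rw [show S * NormedSpace.exp ((s - t) • A) * Θ * Sᵀ
          = S * (NormedSpace.exp ((s - t) • A) * Θ * Sᵀ) from by simp only [Matrix.mul_assoc],
        map_mul_c, ← Matrix.mulVec_mulVec, key_fwd, Matrix.mulVec_mulVec]
    have hEq2 : Set.EqOn (fun t => ((Λ (s - t)).map ((↑) : ℝ → ℂ)) *ᵥ f t)
        (fun t => ((S.map ((↑) : ℝ → ℂ)) * (Θ.map ((↑) : ℝ → ℂ)) *
            (NormedSpace.exp ((-s) • Aᵀ)).map ((↑) : ℝ → ℂ)) *ᵥ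
          (((NormedSpace.exp (t • Aᵀ)).map ((↑) : ℝ → ℂ)) *ᵥ
            ((Sᵀ.map ((↑) : ℝ → ℂ)) *ᵥ F t))) (Set.uIcc s T) := by
      intro t ht'
      rw [hsT] at ht'
      have htT : t ∈ Set.Icc (0:ℝ) T := ⟨hs.1.trans ht'.1, ht'.2⟩
      show ((Λ (s - t)).map ((↑) : ℝ → ℂ)) *ᵥ f t = _
      rcases eq_or_lt_of_le ht'.1 with he | hl
      · rw [hΛ (s - t), if_pos (by simp [← he] : (0:ℝ) ≤ s - t), ← hFeq t htT, ← he]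
        rw [sub_self, zero_smul, NormedSpace.exp_zero, Matrix.mul_one]
        simp only [Matrix.mulVec_mulVec]
        rw [map_mul_c, map_mul_c,
          ← Matrix.mul_assoc
            (S.map ((↑) : ℝ → ℂ) * Θ.map ((↑) : ℝ → ℂ) *
              (NormedSpace.exp ((-s) • Aᵀ)).map ((↑) : ℝ → ℂ))
            ((NormedSpace.exp (s • Aᵀ)).map ((↑) : ℝ → ℂ)) (Sᵀ.map ((↑) : ℝ → ℂ)),
          Matrix.mul_assoc (S.map ((↑) : ℝ → ℂ) * Θ.map ((↑) : ℝ → ℂ))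
            ((NormedSpace.exp ((-s) • Aᵀ)).map ((↑) : ℝ → ℂ))
            ((NormedSpace.exp (s • Aᵀ)).map ((↑) : ℝ → ℂ)),
          expc_neg_mul_expc Aᵀ s, Matrix.mul_one]
      · rw [hΛ (s - t), if_neg (by simp only [not_le]; linarith), ← hFeq t htT]
        rw [show -(s - t) = -s + t from by ring]
        simp only [Matrix.mulVec_mulVec]
        congr 1
        rw [map_mul_c, map_mul_c, map_mul_c, expc_add Aᵀ (-s) t]
        simp only [Matrix.mul_assoc]
    have hcont1 : Continuous
        (fun t => ((S.map ((↑) : ℝ → ℂ)) * (NormedSpace.exp (s • A)).map ((↑) : ℝ → ℂ)) *ᵥ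
          (((NormedSpace.exp ((-t) • A)).map ((↑) : ℝ → ℂ)) *ᵥ
            (((Θ * Sᵀ).map ((↑) : ℝ → ℂ)) *ᵥ F t))) := by
      simpa only [mulVecB_apply, Function.comp_def] using
        (mulVecB n ν ((S.map ((↑) : ℝ → ℂ)) *
          (NormedSpace.exp (s • A)).map ((↑) : ℝ → ℂ))).continuous.comp
          (cont_fwd A ((Θ * Sᵀ).map ((↑) : ℝ → ℂ)) hFc)
    have hcont2 : Continuous
        (fun t => ((S.map ((↑) : ℝ → ℂ)) * (Θ.map ((↑) : ℝ → ℂ)) *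
            (NormedSpace.exp ((-s) • Aᵀ)).map ((↑) : ℝ → ℂ)) *ᵥ
          (((NormedSpace.exp (t • Aᵀ)).map ((↑) : ℝ → ℂ)) *ᵥ
            ((Sᵀ.map ((↑) : ℝ → ℂ)) *ᵥ F t))) := by
      simpa only [mulVecB_apply, Function.comp_def] using
        (mulVecB n ν ((S.map ((↑) : ℝ → ℂ)) * (Θ.map ((↑) : ℝ → ℂ)) *
          (NormedSpace.exp ((-s) • Aᵀ)).map ((↑) : ℝ → ℂ))).continuous.comp
          (cont_bwd Aᵀ (Sᵀ.map ((↑) : ℝ → ℂ)) hFc)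
    have hint1 : IntervalIntegrable (fun t => ((Λ (s - t)).map ((↑) : ℝ → ℂ)) *ᵥ f t)
        volume 0 s := intervalIntegrable_of_eqOn hEq1 (hcont1.intervalIntegrable 0 s)
    have hint2 : IntervalIntegrable (fun t => ((Λ (s - t)).map ((↑) : ℝ → ℂ)) *ᵥ f t)
        volume s T := intervalIntegrable_of_eqOn hEq2 (hcont2.intervalIntegrable s T)
    have piece1 : (∫ t in (0:ℝ)..s, ((Λ (s - t)).map ((↑) : ℝ → ℂ)) *ᵥ f t)
        = (S.map ((↑) : ℝ → ℂ)) *ᵥ hplus s := by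
      rw [intervalIntegral.integral_congr hEq1,
        integral_mulVec _ ((cont_fwd A ((Θ * Sᵀ).map ((↑) : ℝ → ℂ)) hFc).intervalIntegrable 0 s),
        ← Matrix.mulVec_mulVec, ← hrepP s hs]
    have piece2 : (∫ t in s..T, ((Λ (s - t)).map ((↑) : ℝ → ℂ)) *ᵥ f t)
        = (S.map ((↑) : ℝ → ℂ)) *ᵥ ((Θ.map ((↑) : ℝ → ℂ)) *ᵥ hminus s) := by
      rw [intervalIntegral.integral_congr hEq2,
        integral_mulVec _ ((cont_bwd Aᵀ (Sᵀ.map ((↑) : ℝ → ℂ)) hFc).intervalIntegrable s T),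
        hrepM s hs]
      simp only [Matrix.mulVec_mulVec, Matrix.mul_assoc]
    rw [← intervalIntegral.integral_add_adjacent_intervals hint1 hint2, piece1, piece2,
      Matrix.mulVec_add]
  · -- part (ii)
    intro t ht
    constructor
    · have hD := deriv_fwd A ((Θ * Sᵀ).map ((↑) : ℝ → ℂ)) hFc t
      rw [hrepP t ht, ← hFeq t ht]
      exact (hD.hasDerivWithinAt).congr (fun y hy => hrepP y hy) (hrepP t ht)
    · have hD := deriv_bwd Aᵀ (Sᵀ.map ((↑) : ℝ → ℂ)) hFc T t
      rw [hrepM t ht, ← hFeq t ht]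
      exact (hD.hasDerivWithinAt).congr (fun y hy => hrepM y hy) (hrepM t ht)
  · rw [hp 0, intervalIntegral.integral_same]
  · rw [hm T, intervalIntegral.integral_same]
end

section
/- Let T > 0, let A ∈ ℝ^{ν×ν}, Θ ∈ ℝ^{ν×ν} with Θᵀ = −Θ, and S ∈ ℝ^{n×ν}. Suppose the matrix ℧ := −(AΘ + ΘAᵀ) is invertible. Given a continuous f : [0,T] → ℂⁿ, define h₊(t) := ∫₀ᵗ exp((t−τ)A) Θ Sᵀ f(τ) dτ, h₋(t) := ∫ₜᵀ exp((τ−t)Aᵀ) Sᵀ f(τ) dτ, and z(t) := h₊(t) + Θ h₋(t). Then z is twice differentiable on [0,T] and satisfies the second-order ODE z̈(t) + (℧ Aᵀ ℧⁻¹ − A) ż(t) − ℧ Aᵀ ℧⁻¹ A z(t) = −℧ Sᵀ f(t) for all t ∈ [0,T], together with the boundary conditions (Iν + Θ ℧⁻¹ A) z(0) = Θ ℧⁻¹ ż(0) and ż(T) = A z(T). -/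
open MeasureTheory Matrix NormedSpace Set intervalIntegral

section ExpHelpers
attribute [local instance] Matrix.linftyOpNormedRing Matrix.linftyOpNormedAlgebra

lemma exp_entry_hasDerivAt {ν : ℕ} (A : Matrix (Fin ν) (Fin ν) ℝ) (i j : Fin ν) (t : ℝ) :
    HasDerivAt (fun u : ℝ => (exp (u • A)) i j) ((A * exp (t • A)) i j) t := by
  have h := hasDerivAt_exp_smul_const' A t
  have hc : Continuous (fun M : Matrix (Fin ν) (Fin ν) ℝ => M i j) :=
    (continuous_apply j).comp (continuous_apply i)
  let L : Matrix (Fin ν) (Fin ν) ℝ →L[ℝ] ℝ :=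
    { toFun := fun M => M i j
      map_add' := fun _ _ => rfl
      map_smul' := fun _ _ => rfl
      cont := hc }
  exact L.hasFDerivAt.comp_hasDerivAt t h

lemma exp_smul_add {ν : ℕ} (A : Matrix (Fin ν) (Fin ν) ℝ) (a b : ℝ) :
    exp ((a + b) • A) = exp (a • A) * exp (b • A) := by
  rw [add_smul]
  exact NormedSpace.exp_add_of_commute (((Commute.refl A).smul_left a).smul_right b)

lemma exp_mul_exp_neg {ν : ℕ} (A : Matrix (Fin ν) (Fin ν) ℝ) (t : ℝ) :
    exp (t • A) * exp ((-t) • A) = 1 := by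
  rw [← exp_smul_add, add_neg_cancel, zero_smul, NormedSpace.exp_zero]

end ExpHelpers

lemma exp_entry_hasDerivAt_c {ν : ℕ} (A : Matrix (Fin ν) (Fin ν) ℝ) (i j : Fin ν) (t : ℝ) :
    HasDerivAt (fun u : ℝ => ((exp (u • A) : Matrix (Fin ν) (Fin ν) ℝ) i j : ℂ))
      (((A * exp (t • A)) i j : ℂ)) t := by
  have h2 := Complex.ofRealCLM.hasFDerivAt.comp_hasDerivAt t (exp_entry_hasDerivAt A i j t)
  exact h2

lemma exp_entry_neg_hasDerivAt_c {ν : ℕ} (B : Matrix (Fin ν) (Fin ν) ℝ) (i j : Fin ν) (t : ℝ) :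
    HasDerivAt (fun u : ℝ => ((exp ((-u) • B) : Matrix (Fin ν) (Fin ν) ℝ) i j : ℂ))
      (-((B * exp ((-t) • B)) i j : ℂ)) t := by
  have h := (exp_entry_hasDerivAt_c B i j (-t)).scomp t (hasDerivAt_neg t)
  simpa [Function.comp_def] using h

lemma exp_cont {ν : ℕ} (B : Matrix (Fin ν) (Fin ν) ℝ) :
    Continuous fun τ : ℝ => exp (τ • B) := by
  apply continuous_matrix; intro i j
  rw [continuous_iff_continuousAt]; intro t
  exact (exp_entry_hasDerivAt B i j t).continuousAt

lemma pi_hasDerivWithinAt {k : ℕ} {g : ℝ → Fin k → ℂ} {g' : Fin k → ℂ} {s : Set ℝ} {x : ℝ}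
    (h : ∀ i, HasDerivWithinAt (fun t => g t i) (g' i) s x) :
    HasDerivWithinAt g g' s x := by
  have H : HasFDerivWithinAt g ((1 : ℝ →L[ℝ] ℝ).smulRight g') s x := by
    apply hasFDerivWithinAt_pi''
    intro i
    have e : (ContinuousLinearMap.proj (R := ℝ) (φ := fun _ : Fin k => ℂ) i).comp
        ((1 : ℝ →L[ℝ] ℝ).smulRight g') = (1 : ℝ →L[ℝ] ℝ).smulRight (g' i) := by
      ext c
      simp
    rw [e]
    exact (h i).hasFDerivWithinAt
  simpa using H.hasDerivWithinAt

lemma hasDerivWithinAt_component {k : ℕ} {g : ℝ → Fin k → ℂ} {g' : Fin k → ℂ} {s : Set ℝ} {x : ℝ}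
    (h : HasDerivWithinAt g g' s x) (j : Fin k) :
    HasDerivWithinAt (fun t => g t j) (g' j) s x := by
  have := (ContinuousLinearMap.proj (R := ℝ) (φ := fun _ : Fin k => ℂ) j).hasFDerivAt.comp_hasDerivWithinAt x h
  exact this

lemma mulVec_hasDerivWithinAt {m k : ℕ} {M : ℝ → Matrix (Fin m) (Fin k) ℂ}
    {N : Matrix (Fin m) (Fin k) ℂ} {g : ℝ → Fin k → ℂ} {g' : Fin k → ℂ} {s : Set ℝ} {x : ℝ}
    (hM : ∀ i j, HasDerivWithinAt (fun t => M t i j) (N i j) s x)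
    (hg : HasDerivWithinAt g g' s x) :
    HasDerivWithinAt (fun t => M t *ᵥ g t) (N *ᵥ g x + M x *ᵥ g') s x := by
  apply pi_hasDerivWithinAt
  intro i
  have : HasDerivWithinAt (fun t => ∑ j, M t i j * g t j)
      (∑ j, (N i j * g x j + M x i j * g' j)) s x :=
    HasDerivWithinAt.fun_sum fun j _ => (hM i j).mul (hasDerivWithinAt_component hg j)
  simpa [Matrix.mulVec, dotProduct, Finset.sum_add_distrib] using this

lemma const_mulVec_hasDerivWithinAt {m k : ℕ} (M : Matrix (Fin m) (Fin k) ℂ)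
    {g : ℝ → Fin k → ℂ} {g' : Fin k → ℂ} {s : Set ℝ} {x : ℝ}
    (hg : HasDerivWithinAt g g' s x) :
    HasDerivWithinAt (fun t => M *ᵥ g t) (M *ᵥ g') s x := by
  have := mulVec_hasDerivWithinAt (M := fun _ => M) (N := 0)
    (fun i j => by simpa using hasDerivWithinAt_const x s (M i j)) hg
  simpa using this

lemma continuousOn_mulVec {m k : ℕ} {M : ℝ → Matrix (Fin m) (Fin k) ℂ} {g : ℝ → Fin k → ℂ}
    {s : Set ℝ} (hM : Continuous M) (hg : ContinuousOn g s) :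
    ContinuousOn (fun τ => M τ *ᵥ g τ) s := by
  rw [continuousOn_iff_continuous_restrict] at hg ⊢
  exact (hM.comp continuous_subtype_val).matrix_mulVec hg

lemma ftc_right {k : ℕ} {T : ℝ} (hT : 0 < T) {φ : ℝ → Fin k → ℂ}
    (hφ : ContinuousOn φ (Set.Icc 0 T)) {x : ℝ} (hx : x ∈ Set.Icc 0 T) :
    HasDerivWithinAt (fun u => ∫ τ in (0:ℝ)..u, φ τ) (φ x) (Set.Icc 0 T) x := by
  have hmeasIcc : AEStronglyMeasurable φ (volume.restrict (Icc 0 T)) :=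
    hφ.aestronglyMeasurable measurableSet_Icc
  have hint : IntervalIntegrable φ volume 0 x := by
    apply ContinuousOn.intervalIntegrable
    rw [uIcc_of_le hx.1]
    exact hφ.mono (Icc_subset_Icc le_rfl hx.2)
  rcases hx.2.eq_or_lt with rfl | hxT
  · exact (integral_hasDerivWithinAt_right (s := Iic x) (t := Iic x) hint
      ⟨Icc 0 x, Icc_mem_nhdsLE hT, hmeasIcc⟩
      ((hφ x hx).mono_of_mem_nhdsWithin (Icc_mem_nhdsLE hT))).mono Icc_subset_Iic_self
  · rcases hx.1.eq_or_lt with rfl | h0x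
    · exact (integral_hasDerivWithinAt_right (s := Ici 0) (t := Ioi 0) hint
        ⟨Icc 0 T, Icc_mem_nhdsGT hT, hmeasIcc⟩
        ((hφ 0 hx).mono_of_mem_nhdsWithin (Icc_mem_nhdsGT hT))).mono Icc_subset_Ici_self
    · have hmem : Icc (0:ℝ) T ∈ nhds x := Icc_mem_nhds h0x hxT
      exact (integral_hasDerivAt_right hint ⟨Icc 0 T, hmem, hmeasIcc⟩
        ((hφ x hx).continuousAt hmem)).hasDerivWithinAt

lemma ftc_left {k : ℕ} {T : ℝ} (hT : 0 < T) {φ : ℝ → Fin k → ℂ}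
    (hφ : ContinuousOn φ (Set.Icc 0 T)) {x : ℝ} (hx : x ∈ Set.Icc 0 T) :
    HasDerivWithinAt (fun u => ∫ τ in u..T, φ τ) (-φ x) (Set.Icc 0 T) x := by
  have hmeasIcc : AEStronglyMeasurable φ (volume.restrict (Icc 0 T)) :=
    hφ.aestronglyMeasurable measurableSet_Icc
  have hint : IntervalIntegrable φ volume x T := by
    apply ContinuousOn.intervalIntegrable
    rw [uIcc_of_le hx.2]
    exact hφ.mono (Icc_subset_Icc hx.1 le_rfl)
  rcases hx.2.eq_or_lt with rfl | hxT
  · exact (integral_hasDerivWithinAt_left (s := Iic x) (t := Iic x) hint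
      ⟨Icc 0 x, Icc_mem_nhdsLE hT, hmeasIcc⟩
      ((hφ x hx).mono_of_mem_nhdsWithin (Icc_mem_nhdsLE hT))).mono Icc_subset_Iic_self
  · rcases hx.1.eq_or_lt with rfl | h0x
    · exact (integral_hasDerivWithinAt_left (s := Ici 0) (t := Ioi 0) hint
        ⟨Icc 0 T, Icc_mem_nhdsGT hT, hmeasIcc⟩
        ((hφ 0 hx).mono_of_mem_nhdsWithin (Icc_mem_nhdsGT hT))).mono Icc_subset_Ici_self
    · have hmem : Icc (0:ℝ) T ∈ nhds x := Icc_mem_nhds h0x hxT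
      exact (integral_hasDerivAt_left hint ⟨Icc 0 T, hmem, hmeasIcc⟩
        ((hφ x hx).continuousAt hmem)).hasDerivWithinAt

lemma mapc_mulVec_mulVec {a b d : ℕ} (M : Matrix (Fin a) (Fin b) ℝ) (N : Matrix (Fin b) (Fin d) ℝ)
    (v : Fin d → ℂ) :
    (M.map ((↑) : ℝ → ℂ)) *ᵥ ((N.map ((↑) : ℝ → ℂ)) *ᵥ v)
      = ((M * N).map ((↑) : ℝ → ℂ)) *ᵥ v := by
  have h : (M * N).map ((↑) : ℝ → ℂ) = M.map ((↑) : ℝ → ℂ) * N.map ((↑) : ℝ → ℂ) := by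
    ext i j
    simp [Matrix.mul_apply, Matrix.map_apply]
  rw [h, Matrix.mulVec_mulVec]

lemma mapc_add_mulVec {a b : ℕ} (M N : Matrix (Fin a) (Fin b) ℝ) (v : Fin b → ℂ) :
    ((M + N).map ((↑) : ℝ → ℂ)) *ᵥ v
      = (M.map ((↑) : ℝ → ℂ)) *ᵥ v + (N.map ((↑) : ℝ → ℂ)) *ᵥ v := by
  have h : (M + N).map ((↑) : ℝ → ℂ) = M.map ((↑) : ℝ → ℂ) + N.map ((↑) : ℝ → ℂ) := by
    ext i j; simp
  rw [h, Matrix.add_mulVec]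

lemma mapc_sub_mulVec {a b : ℕ} (M N : Matrix (Fin a) (Fin b) ℝ) (v : Fin b → ℂ) :
    ((M - N).map ((↑) : ℝ → ℂ)) *ᵥ v
      = (M.map ((↑) : ℝ → ℂ)) *ᵥ v - (N.map ((↑) : ℝ → ℂ)) *ᵥ v := by
  have h : (M - N).map ((↑) : ℝ → ℂ) = M.map ((↑) : ℝ → ℂ) - N.map ((↑) : ℝ → ℂ) := by
    ext i j; simp
  rw [h, Matrix.sub_mulVec]

lemma mapc_neg_mulVec {a b : ℕ} (M : Matrix (Fin a) (Fin b) ℝ) (v : Fin b → ℂ) :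
    ((-M).map ((↑) : ℝ → ℂ)) *ᵥ v = -((M.map ((↑) : ℝ → ℂ)) *ᵥ v) := by
  have h : (-M).map ((↑) : ℝ → ℂ) = -(M.map ((↑) : ℝ → ℂ)) := by ext i j; simp
  rw [h, Matrix.neg_mulVec]

lemma mapc_one_mulVec {a : ℕ} (v : Fin a → ℂ) :
    ((1 : Matrix (Fin a) (Fin a) ℝ).map ((↑) : ℝ → ℂ)) *ᵥ v = v := by
  rw [Matrix.map_one _ Complex.ofReal_zero Complex.ofReal_one, Matrix.one_mulVec]

lemma mulVec_intervalIntegral {a b : ℕ} (M : Matrix (Fin a) (Fin b) ℂ) {φ : ℝ → Fin b → ℂ}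
    {x y : ℝ} (hφ : IntervalIntegrable φ volume x y) :
    (∫ τ in x..y, M *ᵥ φ τ) = M *ᵥ (∫ τ in x..y, φ τ) := by
  let L : (Fin b → ℂ) →L[ℝ] (Fin a → ℂ) :=
    LinearMap.toContinuousLinearMap ((Matrix.mulVecLin M).restrictScalars ℝ)
  have h := L.intervalIntegral_comp_comm hφ
  simpa [L] using h

/-- Under the physical realizability condition `AΘ + ΘAᵀ + ℧ = 0` with
`℧` invertible, the function `z(t) = h₊(t) + Θ h₋(t)` built from
`h₊(t) = ∫₀ᵗ exp((t−τ)A) Θ Sᵀ f(τ) dτ` and `h₋(t) = ∫ₜᵀ exp((τ−t)Aᵀ) Sᵀ f(τ) dτ`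
is twice differentiable on `[0,T]` and satisfies
`z̈ + (℧Aᵀ℧⁻¹ − A) ż − ℧Aᵀ℧⁻¹A z = −℧Sᵀ f` with boundary conditions
`(Iν + Θ℧⁻¹A) z(0) = Θ℧⁻¹ ż(0)` and `ż(T) = A z(T)`. -/
theorem oqho_second_order_bvp {ν n : ℕ} (T : ℝ) (hT : 0 < T)
    (A Θ : Matrix (Fin ν) (Fin ν) ℝ) (hΘ : Θᵀ = -Θ)
    (S : Matrix (Fin n) (Fin ν) ℝ)
    (℧ : Matrix (Fin ν) (Fin ν) ℝ) (h℧ : ℧ = -(A * Θ + Θ * Aᵀ)) (h℧u : IsUnit ℧)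
    (f : ℝ → Fin n → ℂ) (hf : ContinuousOn f (Set.Icc 0 T))
    (hplus hminus z : ℝ → Fin ν → ℂ)
    (hp : ∀ t : ℝ, hplus t =
      ∫ τ in (0:ℝ)..t, ((NormedSpace.exp ((t - τ) • A) * Θ * Sᵀ).map ((↑) : ℝ → ℂ)) *ᵥ f τ)
    (hm : ∀ t : ℝ, hminus t =
      ∫ τ in t..T, ((NormedSpace.exp ((τ - t) • Aᵀ) * Sᵀ).map ((↑) : ℝ → ℂ)) *ᵥ f τ)
    (hz : ∀ t : ℝ, z t = hplus t + (Θ.map ((↑) : ℝ → ℂ)) *ᵥ hminus t) :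
    ∃ z' z'' : ℝ → Fin ν → ℂ,
      (∀ t ∈ Set.Icc (0:ℝ) T, HasDerivWithinAt z (z' t) (Set.Icc 0 T) t) ∧
      (∀ t ∈ Set.Icc (0:ℝ) T, HasDerivWithinAt z' (z'' t) (Set.Icc 0 T) t) ∧
      (∀ t ∈ Set.Icc (0:ℝ) T,
        z'' t + ((℧ * Aᵀ * ℧⁻¹ - A).map ((↑) : ℝ → ℂ)) *ᵥ z' t
            - ((℧ * Aᵀ * ℧⁻¹ * A).map ((↑) : ℝ → ℂ)) *ᵥ z t
          = -(((℧ * Sᵀ).map ((↑) : ℝ → ℂ)) *ᵥ f t)) ∧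
      ((1 + Θ * ℧⁻¹ * A).map ((↑) : ℝ → ℂ)) *ᵥ z 0
          = ((Θ * ℧⁻¹).map ((↑) : ℝ → ℂ)) *ᵥ z' 0 ∧
      z' T = (A.map ((↑) : ℝ → ℂ)) *ᵥ z T := by
  have hdet : IsUnit ℧.det := (Matrix.isUnit_iff_isUnit_det ℧).1 h℧u
  have hinv : ℧⁻¹ * ℧ = 1 := Matrix.nonsing_inv_mul ℧ hdet
  set φp : ℝ → Fin ν → ℂ :=
    fun τ => ((exp ((-τ) • A) * Θ * Sᵀ).map ((↑) : ℝ → ℂ)) *ᵥ f τ with hφp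
  set φm : ℝ → Fin ν → ℂ :=
    fun τ => ((exp (τ • Aᵀ) * Sᵀ).map ((↑) : ℝ → ℂ)) *ᵥ f τ with hφm
  set gp : ℝ → Fin ν → ℂ := fun t => ∫ τ in (0:ℝ)..t, φp τ with hgp
  set gm : ℝ → Fin ν → ℂ := fun t => ∫ τ in t..T, φm τ with hgm
  have h1 : Continuous fun τ : ℝ => exp ((-τ) • A) := (exp_cont A).comp continuous_neg
  have hMp : Continuous fun τ : ℝ => ((exp ((-τ) • A) * Θ * Sᵀ).map ((↑) : ℝ → ℂ)) :=
    Continuous.matrix_map ((h1.matrix_mul continuous_const).matrix_mul continuous_const)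
      Complex.continuous_ofReal
  have hφpc : ContinuousOn φp (Set.Icc 0 T) := continuousOn_mulVec hMp hf
  have hMm : Continuous fun τ : ℝ => ((exp (τ • Aᵀ) * Sᵀ).map ((↑) : ℝ → ℂ)) :=
    Continuous.matrix_map ((exp_cont Aᵀ).matrix_mul continuous_const) Complex.continuous_ofReal
  have hφmc : ContinuousOn φm (Set.Icc 0 T) := continuousOn_mulVec hMm hf
  -- representations
  have Hp : ∀ t ∈ Set.Icc (0:ℝ) T,
      hplus t = ((exp (t • A)).map ((↑) : ℝ → ℂ)) *ᵥ gp t := by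
    intro t ht
    have hint : IntervalIntegrable φp volume 0 t := by
      apply ContinuousOn.intervalIntegrable
      rw [Set.uIcc_of_le ht.1]
      exact hφpc.mono (Set.Icc_subset_Icc le_rfl ht.2)
    rw [hp t, hgp]
    rw [← mulVec_intervalIntegral _ hint]
    apply intervalIntegral.integral_congr
    intro τ _
    have hE : exp ((t - τ) • A) * Θ * Sᵀ = exp (t • A) * (exp ((-τ) • A) * Θ * Sᵀ) := by
      rw [sub_eq_add_neg, exp_smul_add]
      simp only [Matrix.mul_assoc]
    simp only [hφp]
    rw [mapc_mulVec_mulVec, ← hE]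
  have Hm : ∀ t ∈ Set.Icc (0:ℝ) T,
      hminus t = ((exp ((-t) • Aᵀ)).map ((↑) : ℝ → ℂ)) *ᵥ gm t := by
    intro t ht
    have hint : IntervalIntegrable φm volume t T := by
      apply ContinuousOn.intervalIntegrable
      rw [Set.uIcc_of_le ht.2]
      exact hφmc.mono (Set.Icc_subset_Icc ht.1 le_rfl)
    rw [hm t, hgm]
    rw [← mulVec_intervalIntegral _ hint]
    apply intervalIntegral.integral_congr
    intro τ _
    have hE : exp ((τ - t) • Aᵀ) * Sᵀ = exp ((-t) • Aᵀ) * (exp (τ • Aᵀ) * Sᵀ) := by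
      rw [show τ - t = -t + τ by ring, exp_smul_add]
      simp only [Matrix.mul_assoc]
    simp only [hφm]
    rw [mapc_mulVec_mulVec, ← hE]
  -- derivatives of hplus and hminus
  have Dp : ∀ t ∈ Set.Icc (0:ℝ) T, HasDerivWithinAt hplus
      ((A.map ((↑) : ℝ → ℂ)) *ᵥ hplus t + ((Θ * Sᵀ).map ((↑) : ℝ → ℂ)) *ᵥ f t)
      (Set.Icc 0 T) t := by
    intro t ht
    have hMd : ∀ i j, HasDerivWithinAt
        (fun u : ℝ => ((exp (u • A)).map ((↑) : ℝ → ℂ)) i j)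
        (((A * exp (t • A)).map ((↑) : ℝ → ℂ)) i j) (Set.Icc 0 T) t := fun i j =>
      (exp_entry_hasDerivAt_c A i j t).hasDerivWithinAt
    have h1 := mulVec_hasDerivWithinAt hMd (ftc_right hT hφpc ht)
    have h2 := h1.congr (fun y hy => Hp y hy) (Hp t ht)
    refine h2.congr_deriv (Eq.symm ?_)
    rw [Hp t ht, mapc_mulVec_mulVec A (exp (t • A)) (gp t)]
    simp only [hφp]
    rw [mapc_mulVec_mulVec (exp (t • A)) _ (f t)]
    have hE : exp (t • A) * (exp ((-t) • A) * Θ * Sᵀ) = Θ * Sᵀ := by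
      rw [← Matrix.mul_assoc, ← Matrix.mul_assoc, exp_mul_exp_neg, one_mul]
    rw [hE]
  have Dm : ∀ t ∈ Set.Icc (0:ℝ) T, HasDerivWithinAt hminus
      (-((Aᵀ.map ((↑) : ℝ → ℂ)) *ᵥ hminus t) - ((Sᵀ).map ((↑) : ℝ → ℂ)) *ᵥ f t)
      (Set.Icc 0 T) t := by
    intro t ht
    have hMd : ∀ i j, HasDerivWithinAt
        (fun u : ℝ => ((exp ((-u) • Aᵀ)).map ((↑) : ℝ → ℂ)) i j)
        (((-(Aᵀ * exp ((-t) • Aᵀ))).map ((↑) : ℝ → ℂ)) i j) (Set.Icc 0 T) t := by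
      intro i j
      have h := (exp_entry_neg_hasDerivAt_c Aᵀ i j t).hasDerivWithinAt (s := Set.Icc 0 T)
      simpa [Matrix.map_apply] using h
    have h1 := mulVec_hasDerivWithinAt hMd (ftc_left hT hφmc ht)
    have h2 := h1.congr (fun y hy => Hm y hy) (Hm t ht)
    refine h2.congr_deriv (Eq.symm ?_)
    rw [Matrix.mulVec_neg, mapc_neg_mulVec]
    rw [← mapc_mulVec_mulVec Aᵀ (exp ((-t) • Aᵀ)) (gm t), ← Hm t ht]
    simp only [hφm]
    rw [mapc_mulVec_mulVec (exp ((-t) • Aᵀ)) _ (f t)]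
    have hE : exp ((-t) • Aᵀ) * (exp (t • Aᵀ) * Sᵀ) = Sᵀ := by
      rw [← Matrix.mul_assoc, ← exp_smul_add, neg_add_cancel, zero_smul, NormedSpace.exp_zero, Matrix.one_mul]
    rw [hE]
    abel
  -- the candidate derivatives
  set Z' : ℝ → Fin ν → ℂ :=
    fun t => (A.map ((↑) : ℝ → ℂ)) *ᵥ z t + (℧.map ((↑) : ℝ → ℂ)) *ᵥ hminus t with hZ'
  set Z'' : ℝ → Fin ν → ℂ :=
    fun t => (A.map ((↑) : ℝ → ℂ)) *ᵥ Z' t - ((℧ * Aᵀ).map ((↑) : ℝ → ℂ)) *ᵥ hminus t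
      - ((℧ * Sᵀ).map ((↑) : ℝ → ℂ)) *ᵥ f t with hZ''
  have DZ : ∀ t ∈ Set.Icc (0:ℝ) T, HasDerivWithinAt z (Z' t) (Set.Icc 0 T) t := by
    intro t ht
    have h := (Dp t ht).add (const_mulVec_hasDerivWithinAt (Θ.map ((↑) : ℝ → ℂ)) (Dm t ht))
    have h2 := h.congr (fun y _ => hz y) (hz t)
    refine h2.congr_deriv (Eq.symm ?_)
    simp only [hZ']
    rw [hz t, Matrix.mulVec_add, mapc_mulVec_mulVec A Θ]
    rw [Matrix.mulVec_sub, Matrix.mulVec_neg, mapc_mulVec_mulVec Θ Aᵀ, mapc_mulVec_mulVec Θ Sᵀ]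
    have hmat : ℧ = -(Θ * Aᵀ) - A * Θ := by rw [h℧]; abel
    rw [hmat, mapc_sub_mulVec, mapc_neg_mulVec]
    abel
  have DZ' : ∀ t ∈ Set.Icc (0:ℝ) T, HasDerivWithinAt Z' (Z'' t) (Set.Icc 0 T) t := by
    intro t ht
    have h := (const_mulVec_hasDerivWithinAt (A.map ((↑) : ℝ → ℂ)) (DZ t ht)).add
      (const_mulVec_hasDerivWithinAt (℧.map ((↑) : ℝ → ℂ)) (Dm t ht))
    have h2 := h.congr (fun y _ => congrFun hZ' y) (congrFun hZ' t)
    refine h2.congr_deriv (Eq.symm ?_)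
    simp only [hZ'']
    rw [Matrix.mulVec_sub, Matrix.mulVec_neg, mapc_mulVec_mulVec ℧ Aᵀ, mapc_mulVec_mulVec ℧ Sᵀ]
    abel
  have ODE : ∀ t ∈ Set.Icc (0:ℝ) T,
      Z'' t + ((℧ * Aᵀ * ℧⁻¹ - A).map ((↑) : ℝ → ℂ)) *ᵥ Z' t
          - ((℧ * Aᵀ * ℧⁻¹ * A).map ((↑) : ℝ → ℂ)) *ᵥ z t
        = -(((℧ * Sᵀ).map ((↑) : ℝ → ℂ)) *ᵥ f t) := by
    intro t ht
    have hw : Z' t - (A.map ((↑) : ℝ → ℂ)) *ᵥ z t = (℧.map ((↑) : ℝ → ℂ)) *ᵥ hminus t := by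
      simp only [hZ']
      abel
    have key : ((℧ * Aᵀ * ℧⁻¹).map ((↑) : ℝ → ℂ)) *ᵥ Z' t
        - ((℧ * Aᵀ * ℧⁻¹ * A).map ((↑) : ℝ → ℂ)) *ᵥ z t
        = ((℧ * Aᵀ).map ((↑) : ℝ → ℂ)) *ᵥ hminus t := by
      rw [← mapc_mulVec_mulVec (℧ * Aᵀ * ℧⁻¹) A (z t), ← Matrix.mulVec_sub, hw,
        mapc_mulVec_mulVec, mul_assoc (℧ * Aᵀ) ℧⁻¹ ℧, hinv, mul_one]
    have key' : ((℧ * Aᵀ * ℧⁻¹).map ((↑) : ℝ → ℂ)) *ᵥ Z' t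
        = ((℧ * Aᵀ).map ((↑) : ℝ → ℂ)) *ᵥ hminus t
          + ((℧ * Aᵀ * ℧⁻¹ * A).map ((↑) : ℝ → ℂ)) *ᵥ z t := by
      rw [← key]; abel
    simp only [hZ'']
    rw [mapc_sub_mulVec (℧ * Aᵀ * ℧⁻¹) A (Z' t), key']
    abel
  have B0 : ((1 + Θ * ℧⁻¹ * A).map ((↑) : ℝ → ℂ)) *ᵥ z 0
      = ((Θ * ℧⁻¹).map ((↑) : ℝ → ℂ)) *ᵥ Z' 0 := by
    have hp0 : hplus 0 = 0 := by rw [hp 0, intervalIntegral.integral_same]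
    have hz0 : z 0 = (Θ.map ((↑) : ℝ → ℂ)) *ᵥ hminus 0 := by rw [hz 0, hp0, zero_add]
    simp only [hZ']
    rw [Matrix.mulVec_add, mapc_mulVec_mulVec (Θ * ℧⁻¹) A (z 0),
      mapc_mulVec_mulVec (Θ * ℧⁻¹) ℧ (hminus 0), mul_assoc Θ ℧⁻¹ ℧, hinv, mul_one,
      ← hz0, mapc_add_mulVec, mapc_one_mulVec]
    abel
  have BT : Z' T = (A.map ((↑) : ℝ → ℂ)) *ᵥ z T := by
    have hmT : hminus T = 0 := by rw [hm T, intervalIntegral.integral_same]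
    simp only [hZ']
    rw [hmT, Matrix.mulVec_zero, add_zero]
  exact ⟨Z', Z'', DZ, DZ', ODE, B0, BT⟩
end
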